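/- Let B = ⋃_{n≥1} k[[t^{1/n}]] (the ring of Puiseux-type integral power series over a field k). Then the quotient ring B/tB is not decent: there exists a nonzero element x ∈ B/tB lying in ⋂_{p ∈ Spec(B/tB)} ⋂_{n ∈ ℕ} pⁿ. For example, the class of t^{1/2} is such an element. -/

import Mathlib

set_option synthInstance.maxHeartbeats 1000000
set_option maxHeartbeats 1000000

/-- The ring `B = ⋃_{n ≥ 1} k[[t^{1/n}]]` of Puiseux-type integral power series,
realized as the subring of Hahn series over `ℚ` whose support consists of
nonnegative rationals with denominator dividing some fixed `n`. -/
noncomputable def PuiseuxInt (k : Type*) [Field k] : Subring (HahnSeries ℚ k) where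
  carrier := {x | ∃ n : ℕ, 0 < n ∧ ∀ q ∈ x.support, 0 ≤ q ∧ ∃ m : ℕ, q = (m : ℚ) / n}
  mul_mem' := by
    rintro x y ⟨n₁, hn₁, hx⟩ ⟨n₂, hn₂, hy⟩
    refine ⟨n₁ * n₂, Nat.mul_pos hn₁ hn₂, fun q hq => ?_⟩
    rcases HahnSeries.support_mul_subset hq with ⟨q₁, hq₁, q₂, hq₂, rfl⟩
    obtain ⟨h₁, m₁, rfl⟩ := hx q₁ hq₁
    obtain ⟨h₂, m₂, rfl⟩ := hy q₂ hq₂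
    refine ⟨by positivity, m₁ * n₂ + m₂ * n₁, ?_⟩
    push_cast
    field_simp
  one_mem' := by
    refine ⟨1, one_pos, fun q hq => ?_⟩
    have h0 : q = 0 := by
      have h1 : (1 : HahnSeries ℚ k) = HahnSeries.single (0 : ℚ) (1 : k) :=
        (HahnSeries.single_zero_one).symm
      rw [h1] at hq
      simpa using HahnSeries.support_single_subset hq
    exact ⟨le_of_eq h0.symm, 0, by simp [h0]⟩
  add_mem' := by
    rintro x y ⟨n₁, hn₁, hx⟩ ⟨n₂, hn₂, hy⟩
    refine ⟨n₁ * n₂, Nat.mul_pos hn₁ hn₂, fun q hq => ?_⟩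
    rcases (HahnSeries.support_add_subset x y hq : q ∈ x.support ∪ y.support) with h | h
    · obtain ⟨h₁, m₁, rfl⟩ := hx q h
      exact ⟨h₁, m₁ * n₂, by push_cast; field_simp⟩
    · obtain ⟨h₂, m₂, rfl⟩ := hy q h
      exact ⟨h₂, m₂ * n₁, by push_cast; field_simp⟩
  zero_mem' := ⟨1, one_pos, by simp⟩
  neg_mem' := by
    rintro x ⟨n, hn, hx⟩
    exact ⟨n, hn, fun q hq => hx q (by simpa using hq)⟩
  
/-- `t = t^{1/1}` as an element of `B`. -/
noncomputable def puiseuxT (k : Type*) [Field k] : PuiseuxInt k :=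
  ⟨HahnSeries.single (1 : ℚ) (1 : k), ⟨1, one_pos, fun q hq => by
    have : q = 1 := HahnSeries.support_single_subset hq
    exact ⟨by simp [this], 1, by simp [this]⟩⟩⟩

/-- `t^{1/2}` as an element of `B`. -/
noncomputable def puiseuxSqrtT (k : Type*) [Field k] : PuiseuxInt k :=
  ⟨HahnSeries.single (1/2 : ℚ) (1 : k), ⟨2, two_pos, fun q hq => by
    have : q = 1/2 := HahnSeries.support_single_subset hq
    exact ⟨by simp [this], 1, by simp [this]⟩⟩⟩

noncomputable def puiseuxRoot (k : Type*) [Field k] (N : ℕ) (hN : 0 < N) : PuiseuxInt k :=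
  ⟨HahnSeries.single (1/(2*N) : ℚ) (1 : k), ⟨2*N, by positivity, fun q hq => by
    have hq' : q = 1/(2*N) := HahnSeries.support_single_subset hq
    refine ⟨by rw [hq']; positivity, 1, by rw [hq']; push_cast; ring⟩⟩⟩

lemma root_pow (k : Type*) [Field k] (N : ℕ) (hN : 0 < N) :
    (puiseuxRoot k N hN) ^ N = puiseuxSqrtT k := by
  apply Subtype.ext
  push_cast [puiseuxRoot, puiseuxSqrtT]
  rw [HahnSeries.single_pow, one_pow]
  have hNne : (N : ℚ) ≠ 0 := by positivity
  have h : (N : ℕ) • (1/(2*(N:ℚ))) = 1/2 := by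
    rw [nsmul_eq_mul]; field_simp
  rw [h]

lemma root_pow2 (k : Type*) [Field k] (N : ℕ) (hN : 0 < N) :
    (puiseuxRoot k N hN) ^ (2*N) = puiseuxT k := by
  apply Subtype.ext
  push_cast [puiseuxRoot, puiseuxT]
  rw [HahnSeries.single_pow, one_pow]
  have hNne : (N : ℚ) ≠ 0 := by positivity
  have h : (2*N : ℕ) • (1/(2*(N:ℚ))) = 1 := by
    rw [nsmul_eq_mul]; push_cast; field_simp
  rw [h]

/-- `B/tB` is not decent: the class of `t^{1/2}` is a nonzero element lying in
`⋂_{p ∈ Spec(B/tB)} ⋂_{n} pⁿ`. -/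
theorem puiseux_quotient_not_decent (k : Type*) [Field k] :
    (Ideal.Quotient.mk (Ideal.span {puiseuxT k}) (puiseuxSqrtT k) ≠ 0) ∧
    (∀ (p : Ideal ((PuiseuxInt k) ⧸ Ideal.span {puiseuxT k})), p.IsPrime → ∀ n : ℕ,
      Ideal.Quotient.mk (Ideal.span {puiseuxT k}) (puiseuxSqrtT k) ∈ p ^ n) := by
  constructor
  · intro h
    rw [Ideal.Quotient.eq_zero_iff_mem, Ideal.mem_span_singleton] at h
    obtain ⟨⟨y, hy⟩, hxy⟩ := h
    have hval : (HahnSeries.single (1/2 : ℚ) (1 : k)) = HahnSeries.single (1 : ℚ) (1 : k) * y := by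
      have := congrArg (Subtype.val) hxy
      simpa [puiseuxT, puiseuxSqrtT] using this
    have h1 : (HahnSeries.single (1/2 : ℚ) (1 : k)).coeff (1/2) = (1 : k) := by simp
    have h2 : (HahnSeries.single (1 : ℚ) (1 : k) * y).coeff ((-1/2 : ℚ) + 1) = 1 * y.coeff (-1/2) :=
      HahnSeries.coeff_single_mul_add
    have hne : ((-1/2 : ℚ) + 1) = 1/2 := by norm_num
    rw [hne, one_mul] at h2
    have hy0 : y.coeff (-1/2) = 0 := by
      by_contra hc
      obtain ⟨m, hm, hsup⟩ := hy
      have := (hsup (-1/2) hc).1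
      norm_num at this
    rw [hval, h2, hy0] at h1
    exact one_ne_zero h1.symm
  · intro p hp n
    have hroot : Ideal.Quotient.mk (Ideal.span {puiseuxT k}) (puiseuxRoot k (n+1) (Nat.succ_pos n)) ∈ p := by
      apply hp.mem_of_pow_mem (2*(n+1))
      rw [← map_pow, root_pow2]
      have : Ideal.Quotient.mk (Ideal.span {puiseuxT k}) (puiseuxT k) = 0 := by
        rw [Ideal.Quotient.eq_zero_iff_mem]
        exact Ideal.mem_span_singleton_self _
      rw [this]
      exact Submodule.zero_mem _
    have key : Ideal.Quotient.mk (Ideal.span {puiseuxT k}) (puiseuxSqrtT k) ∈ p ^ (n+1) := by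
      rw [← root_pow k (n+1) (Nat.succ_pos n), map_pow]
      exact Ideal.pow_mem_pow hroot (n+1)
    exact Ideal.pow_le_pow_right (Nat.le_succ n) key
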